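/- Let p, q be coprime odd integers with 0 < q < p, ε_i = (-1)^⌊iq/p⌋, and let u = [[1,x],[0,1]], v = [[1,0],[x,1]] in SL_2(ℂ) for some x ∈ ℂ. Set w = u^{ε_1} v^{ε_2} ⋯ u^{ε_{p-2}} v^{ε_{p-1}}. If the Möbius transformation w satisfies w(∞) = 0, then wu = ±vw in PSL_2(ℂ), i.e., wu = vw or wu = -vw in SL_2(ℂ). -/

import Mathlib

open OnePoint Matrix

/-- Möbius action of a `2 × 2` complex matrix on `ℙ¹(ℂ) = ℂ ∪ {∞}`. -/
noncomputable def mobius (M : Matrix (Fin 2) (Fin 2) ℂ) : OnePoint ℂ → OnePoint ℂ :=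
  fun z =>
    match z with
    | Option.none => if M 1 0 = 0 then ∞ else ((M 0 0 / M 1 0 : ℂ) : OnePoint ℂ)
    | Option.some w =>
        if M 1 0 * w + M 1 1 = 0 then ∞
        else (((M 0 0 * w + M 0 1) / (M 1 0 * w + M 1 1) : ℂ) : OnePoint ℂ)

/-- The sign sequence `ε_i = (-1)^⌊iq/p⌋`. -/
noncomputable def eps (p q i : ℤ) : ℤ :=
  (((-1 : ℤˣ) ^ ⌊((i * q : ℤ) : ℚ) / ((p : ℤ) : ℚ)⌋ : ℤˣ) : ℤ)

/-- `u = [[1,x],[0,1]]` as an element of `SL₂(ℂ)`. -/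
noncomputable def U (x : ℂ) : Matrix.SpecialLinearGroup (Fin 2) ℂ :=
  ⟨!![1, x; 0, 1], by simp [Matrix.det_fin_two_of]⟩

/-- `v = [[1,0],[x,1]]` as an element of `SL₂(ℂ)`. -/
noncomputable def V (x : ℂ) : Matrix.SpecialLinearGroup (Fin 2) ℂ :=
  ⟨!![1, 0; x, 1], by simp [Matrix.det_fin_two_of]⟩

/-- The word `w = u^{ε₁} v^{ε₂} ⋯ u^{ε_{p-2}} v^{ε_{p-1}}`. -/
noncomputable def wWord (p q : ℕ) (x : ℂ) : Matrix.SpecialLinearGroup (Fin 2) ℂ :=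
  ((List.range ((p - 1) / 2)).map
    (fun j => U x ^ eps p q (2 * j + 1) * V x ^ eps p q (2 * j + 2))).prod

/-! ### Auxiliary lemmas -/

lemma U_mul (a b : ℂ) : U a * U b = U (a + b) := by
  apply Subtype.ext
  show (U a : Matrix (Fin 2) (Fin 2) ℂ) * U b = _
  ext i j; fin_cases i <;> fin_cases j <;>
    (simp [U, Matrix.mul_apply, Fin.sum_univ_two]; try ring)

lemma U_zero : U 0 = 1 := by
  apply Subtype.ext
  show (!![1, (0:ℂ); 0, 1]) = _
  simp [Matrix.one_fin_two]

lemma U_inv (a : ℂ) : (U a)⁻¹ = U (-a) := by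
  apply inv_eq_of_mul_eq_one_right
  rw [U_mul]; simp [U_zero]

lemma U_zpow (x : ℂ) (n : ℤ) : U x ^ n = U (n * x) := by
  induction n using Int.induction_on with
  | zero => simpa using U_zero.symm
  | succ k ih => rw [_root_.zpow_add_one, ih, U_mul]; push_cast; ring_nf
  | pred k ih => rw [_root_.zpow_sub_one, ih, U_inv, U_mul]; push_cast; ring_nf

lemma V_mul (a b : ℂ) : V a * V b = V (a + b) := by
  apply Subtype.ext
  show (V a : Matrix (Fin 2) (Fin 2) ℂ) * V b = _
  ext i j; fin_cases i <;> fin_cases j <;>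
    (simp [V, Matrix.mul_apply, Fin.sum_univ_two]; try ring)

lemma V_zero : V 0 = 1 := by
  apply Subtype.ext
  show (!![1, (0:ℂ); 0, 1]) = _
  simp [Matrix.one_fin_two]

lemma V_inv (a : ℂ) : (V a)⁻¹ = V (-a) := by
  apply inv_eq_of_mul_eq_one_right
  rw [V_mul]; simp [V_zero]

lemma V_zpow (x : ℂ) (n : ℤ) : V x ^ n = V (n * x) := by
  induction n using Int.induction_on with
  | zero => simpa using V_zero.symm
  | succ k ih => rw [_root_.zpow_add_one, ih, V_mul]; push_cast; ring_nf
  | pred k ih => rw [_root_.zpow_sub_one, ih, V_inv, V_mul]; push_cast; ring_nf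

lemma U_transpose (a : ℂ) : ((U a : Matrix (Fin 2) (Fin 2) ℂ))ᵀ = (V a : Matrix (Fin 2) (Fin 2) ℂ) := by
  ext i j; fin_cases i <;> fin_cases j <;> simp [U, V]

lemma V_transpose (a : ℂ) : ((V a : Matrix (Fin 2) (Fin 2) ℂ))ᵀ = (U a : Matrix (Fin 2) (Fin 2) ℂ) := by
  ext i j; fin_cases i <;> fin_cases j <;> simp [U, V]

lemma neg_one_zpow_congr {a b : ℤ} (h : a % 2 = b % 2) : (-1 : ℤˣ) ^ a = (-1 : ℤˣ) ^ b := by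
  obtain ⟨t, ht⟩ : ∃ t, b = a + 2 * t := ⟨(b - a) / 2, by omega⟩
  subst ht
  have h2 : (-1 : ℤˣ) ^ (2 * t) = 1 := Even.neg_one_zpow ⟨t, by ring⟩
  rw [_root_.zpow_add, h2, mul_one]

lemma eps_eq (p : ℕ) (q i : ℤ) :
    eps p q i = (((-1 : ℤˣ) ^ (i * q / (p : ℤ)) : ℤˣ) : ℤ) := by
  unfold eps
  rw [show (((p : ℕ) : ℤ) : ℚ) = ((p : ℕ) : ℚ) by push_cast; ring,
    Rat.floor_intCast_div_natCast]

lemma eps_palindrome (p q : ℕ) (hoq : Odd q) (hcop : Nat.Coprime p q)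
    (i : ℤ) (h1 : 0 < i) (h2 : i < p) :
    eps p q ((p : ℤ) - i) = eps p q i := by
  have hp0 : (0 : ℤ) < p := lt_trans h1 h2
  have hnd : ¬ ((p : ℤ) ∣ i * (q : ℤ)) := by
    intro h
    have hcop' : IsCoprime (p : ℤ) (q : ℤ) := by
      rw [Int.isCoprime_iff_gcd_eq_one]; exact_mod_cast hcop
    have hdi : (p : ℤ) ∣ i := hcop'.dvd_of_dvd_mul_right h
    have := Int.le_of_dvd h1 hdi
    omega
  rw [eps_eq, eps_eq]
  congr 1
  apply neg_one_zpow_congr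
  set d := i * (q : ℤ) / (p : ℤ) with hd
  have hr0 : 0 ≤ i * (q : ℤ) % p := Int.emod_nonneg _ (ne_of_gt hp0)
  have hrp : i * (q : ℤ) % p < p := Int.emod_lt_of_pos _ hp0
  have hrne : i * (q : ℤ) % p ≠ 0 := fun h => hnd (Int.dvd_of_emod_eq_zero h)
  have hde : (p : ℤ) * d + i * (q : ℤ) % p = i * q := Int.mul_ediv_add_emod _ _
  have key : ((p : ℤ) - i) * q / p = q - d - 1 := by
    have hsp : ((p : ℤ) - i) * q = ((p : ℤ) - i * (q : ℤ) % p) + (q - d - 1) * p := by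
      linear_combination hde
    rw [hsp, Int.add_mul_ediv_right _ _ (ne_of_gt hp0),
      Int.ediv_eq_zero_of_lt (by omega) (by omega), zero_add]
  rw [key]
  obtain ⟨k, hk⟩ := hoq
  have : (q : ℤ) = 2 * k + 1 := by exact_mod_cast hk
  omega

lemma coe_list_prod (l : List (Matrix.SpecialLinearGroup (Fin 2) ℂ)) :
    ((l.prod : Matrix.SpecialLinearGroup (Fin 2) ℂ) : Matrix (Fin 2) (Fin 2) ℂ) =
      (l.map Subtype.val).prod := by
  induction l with
  | nil => rfl
  | cons a t ih => simp [ih]; rfl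

lemma reverse_map_range {α : Type*} (L : ℕ) (h : ℕ → α) :
    ((List.range L).map h).reverse = (List.range L).map (fun k => h (L - 1 - k)) := by
  apply List.ext_getElem (by simp)
  intro n h1 h2
  simp only [List.getElem_reverse, List.getElem_map, List.getElem_range,
    List.length_reverse, List.length_map, List.length_range]

lemma flatMap_cast (l : List ℕ) : (List.flatMap (fun a : ℕ => [(a : ℤ)]) l) = l.map Nat.cast := by
  induction l with
  | nil => rfl
  | cons a t ih => simp only [List.flatMap_cons, ih, List.map_cons, List.singleton_append]

lemma wWord_symm (p q : ℕ) (hq : 0 < q) (hqp : q < p) (hp : Odd p) (hoq : Odd q)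
    (hcop : Nat.Coprime p q) (x : ℂ) :
    ((wWord p q x : Matrix (Fin 2) (Fin 2) ℂ))ᵀ = (wWord p q x : Matrix (Fin 2) (Fin 2) ℂ) := by
  obtain ⟨m, hm⟩ := hp
  set L := (p - 1) / 2 with hL
  have hLm : L = m := by omega
  have hcoe : (wWord p q x : Matrix (Fin 2) (Fin 2) ℂ) =
      ((List.range L).map (fun j : ℕ =>
        ((U ((eps p q (2 * (j : ℤ) + 1) : ℂ) * x) : Matrix (Fin 2) (Fin 2) ℂ)) *
        ((V ((eps p q (2 * (j : ℤ) + 2) : ℂ) * x) : Matrix (Fin 2) (Fin 2) ℂ)))).prod := by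
    rw [wWord, coe_list_prod]
    simp only [List.pure_def, List.bind_eq_flatMap, flatMap_cast, List.map_map]
    rw [← hL]
    erw [List.map_map]
    congr 1
    apply List.map_congr_left
    intro j _
    simp [Function.comp, U_zpow, V_zpow, Matrix.SpecialLinearGroup.coe_mul]
  rw [hcoe, Matrix.transpose_list_prod, List.map_map, reverse_map_range]
  congr 1
  apply List.map_congr_left
  intro k hk
  rw [List.mem_range] at hk
  simp only [Function.comp_apply, Matrix.transpose_mul, U_transpose, V_transpose]
  have e1 : eps p q (2 * ((L - 1 - k : ℕ) : ℤ) + 2) = eps p q (2 * (k : ℤ) + 1) := by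
    rw [show (2 * ((L - 1 - k : ℕ) : ℤ) + 2) = (p : ℤ) - (2 * (k : ℤ) + 1) by omega]
    exact eps_palindrome p q hoq hcop _ (by omega) (by omega)
  have e2 : eps p q (2 * ((L - 1 - k : ℕ) : ℤ) + 1) = eps p q (2 * (k : ℤ) + 2) := by
    rw [show (2 * ((L - 1 - k : ℕ) : ℤ) + 1) = (p : ℤ) - (2 * (k : ℤ) + 2) by omega]
    exact eps_palindrome p q hoq hcop _ (by omega) (by omega)
  rw [e1, e2]

theorem w_intertwines (p q : ℕ) (hq : 0 < q) (hqp : q < p) (hp : Odd p) (hoq : Odd q)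
    (hcop : Nat.Coprime p q) (x : ℂ)
    (hw : mobius ((wWord p q x : Matrix (Fin 2) (Fin 2) ℂ)) ∞ = ((0 : ℂ) : OnePoint ℂ)) :
    ((wWord p q x * U x : Matrix.SpecialLinearGroup (Fin 2) ℂ) : Matrix (Fin 2) (Fin 2) ℂ) =
        ((V x * wWord p q x : Matrix.SpecialLinearGroup (Fin 2) ℂ) : Matrix (Fin 2) (Fin 2) ℂ) ∨
    ((wWord p q x * U x : Matrix.SpecialLinearGroup (Fin 2) ℂ) : Matrix (Fin 2) (Fin 2) ℂ) =
        -((V x * wWord p q x : Matrix.SpecialLinearGroup (Fin 2) ℂ) : Matrix (Fin 2) (Fin 2) ℂ) := by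
  left
  have hsym := wWord_symm p q hq hqp hp hoq hcop x
  have hba : (wWord p q x : Matrix (Fin 2) (Fin 2) ℂ) 1 0
      = (wWord p q x : Matrix (Fin 2) (Fin 2) ℂ) 0 1 := by
    have := congrFun (congrFun hsym 1) 0
    simpa [Matrix.transpose_apply] using this.symm
  have hmob : mobius ((wWord p q x : Matrix (Fin 2) (Fin 2) ℂ)) ∞ =
      (if (wWord p q x : Matrix (Fin 2) (Fin 2) ℂ) 1 0 = 0 then ∞
       else (((wWord p q x : Matrix (Fin 2) (Fin 2) ℂ) 0 0
            / (wWord p q x : Matrix (Fin 2) (Fin 2) ℂ) 1 0 : ℂ) : OnePoint ℂ)) := rfl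
  rw [hmob] at hw
  have ha : (wWord p q x : Matrix (Fin 2) (Fin 2) ℂ) 0 0 = 0 := by
    by_cases hc : (wWord p q x : Matrix (Fin 2) (Fin 2) ℂ) 1 0 = 0
    · rw [if_pos hc] at hw
      exact absurd hw (OnePoint.infty_ne_coe _)
    · rw [if_neg hc] at hw
      have h0 := OnePoint.coe_eq_coe.mp hw
      rcases div_eq_zero_iff.mp h0 with h | h
      · exact h
      · exact absurd h hc
  rw [Matrix.SpecialLinearGroup.coe_mul, Matrix.SpecialLinearGroup.coe_mul]
  ext i j
  fin_cases i <;> fin_cases j <;>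
    (simp [U, V, Matrix.mul_apply, Fin.sum_univ_two, ha, hba]; try ring)
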